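/- Let {a_n} be a sequence of real numbers with limsup_{n→∞} a_n = ∞. Then for infinitely many k ∈ ℕ, one has a_{k+1} > (1 + 1/k²) · max_{1 ≤ n ≤ k} a_n. -/

import Mathlib

open Polynomial Filter

/-- The multiset of conjugates (in ℂ) of a complex number: the roots of its
minimal polynomial over ℚ. -/
noncomputable def conjugates (α : ℂ) : Multiset ℂ :=
  ((minpoly ℚ α).map (algebraMap ℚ ℂ)).roots

/-- The house of an algebraic number: the maximum modulus of its conjugates. -/
noncomputable def house (α : ℂ) : ℝ :=
  (((conjugates α).map (fun z => ‖z‖₊)).sup : NNReal)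

/-- The primitive integer minimal polynomial of an algebraic number. -/
noncomputable def intMinPoly (α : ℂ) : Polynomial ℤ :=
  (IsLocalization.integerNormalization (nonZeroDivisors ℤ) (minpoly ℚ α)).primPart

/-- The Mahler measure of an algebraic number. -/
noncomputable def mahlerM (α : ℂ) : ℝ :=
  ((|(intMinPoly α).leadingCoeff| : ℤ) : ℝ) *
    ((((intMinPoly α).map (algebraMap ℤ ℂ)).roots).map (fun z => max 1 ‖z‖)).prod

/-- The multiplicative Weil height of an algebraic number. -/
noncomputable def weilHeight (α : ℂ) : ℝ :=
  mahlerM α ^ ((1 : ℝ) / (minpoly ℚ α).natDegree)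

/-- Value of the finite continued fraction [0; a_1, ..., a_N]. -/
noncomputable def cfVal {K : Type*} [DivisionRing K] : List K → K
  | [] => 0
  | a :: l => 1 / (a + cfVal l)

/-- The N-th convergent [0; a 1, ..., a N] of the continued fraction with partial
quotients a 1, a 2, .... -/
noncomputable def cfConv {K : Type*} [DivisionRing K] (a : ℕ → K) (N : ℕ) : K :=
  cfVal ((List.range N).map fun i => a (i + 1))

/-- Running maximum: `max(1, a 1, ..., a k)`. -/
noncomputable def runMax (a : ℕ → ℝ) : ℕ → ℝ
  | 0 => 1
  | (k+1) => max (runMax a k) (a (k+1))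

lemma one_le_runMax (a : ℕ → ℝ) (k : ℕ) : 1 ≤ runMax a k := by
  induction k with
  | zero => simp [runMax]
  | succ k ih => exact le_trans ih (le_max_left _ _)

lemma le_runMax (a : ℕ → ℝ) {n k : ℕ} (hn : 1 ≤ n) (hk : n ≤ k) : a n ≤ runMax a k := by
  induction k with
  | zero => omega
  | succ k ih =>
    rcases Nat.lt_or_ge n (k+1) with hlt | hge
    · exact le_trans (ih (by omega)) (le_max_left _ _)
    · have : n = k + 1 := by omega
      subst this
      exact le_max_right _ _

theorem frequently_gt_max (a : ℕ → ℝ)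
    (h : limsup (fun n => (a n : EReal)) atTop = ⊤) :
    {k : ℕ | 1 ≤ k ∧ ∀ n, 1 ≤ n → n ≤ k →
      (1 + 1 / (k : ℝ) ^ 2) * a n < a (k + 1)}.Infinite := by
  by_contra hfin
  rw [Set.not_infinite] at hfin
  obtain ⟨K, hK⟩ := hfin.bddAbove
  set N := K + 1 with hN
  have hN1 : 1 ≤ N := by omega
  -- Step inequality
  have step : ∀ k : ℕ, N ≤ k → runMax a (k+1) ≤ (1 + 1 / (k : ℝ) ^ 2) * runMax a k := by
    intro k hk
    have hknot : k ∉ {k : ℕ | 1 ≤ k ∧ ∀ n, 1 ≤ n → n ≤ k →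
        (1 + 1 / (k : ℝ) ^ 2) * a n < a (k + 1)} := by
      intro hmem
      have := hK hmem
      omega
    have hk1 : 1 ≤ k := by omega
    rw [Set.mem_setOf_eq] at hknot
    push_neg at hknot
    obtain ⟨n, hn1, hnk, hle⟩ := hknot hk1
    have hkR : (1 : ℝ) ≤ (k : ℝ) := by exact_mod_cast hk1
    have hfac : (1 : ℝ) ≤ 1 + 1 / (k : ℝ) ^ 2 := by
      have : (0:ℝ) < (k:ℝ)^2 := by positivity
      have : (0:ℝ) ≤ 1 / (k:ℝ)^2 := by positivity
      linarith
    have hMk : (0:ℝ) ≤ runMax a k := le_trans zero_le_one (one_le_runMax a k)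
    have h1 : a (k+1) ≤ (1 + 1 / (k : ℝ) ^ 2) * runMax a k := by
      calc a (k+1) ≤ (1 + 1 / (k : ℝ) ^ 2) * a n := hle
        _ ≤ (1 + 1 / (k : ℝ) ^ 2) * runMax a k := by
            apply mul_le_mul_of_nonneg_left (le_runMax a hn1 hnk) (by linarith)
    have h2 : runMax a k ≤ (1 + 1 / (k : ℝ) ^ 2) * runMax a k := by
      nlinarith
    show max (runMax a k) (a (k+1)) ≤ _
    exact max_le h2 h1
  -- Main bound by induction
  have bound : ∀ k : ℕ, N ≤ k →
      runMax a k ≤ runMax a N * Real.exp (2 / (N : ℝ) - 2 / (k : ℝ)) := by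
    intro k hk
    induction k, hk using Nat.le_induction with
    | base =>
      simp only [sub_self]
      rw [Real.exp_zero, mul_one]
    | succ k hk ih =>
      have hk1 : (1:ℝ) ≤ (k:ℝ) := by exact_mod_cast (by omega : 1 ≤ k)
      have hk0 : (0:ℝ) < (k:ℝ) := by linarith
      have hk10 : (0:ℝ) < (k:ℝ) + 1 := by linarith
      have hMN : (0:ℝ) < runMax a N := lt_of_lt_of_le zero_lt_one (one_le_runMax a N)
      have hMk : (0:ℝ) ≤ runMax a k := le_trans zero_le_one (one_le_runMax a k)
      have hexp : (1 + 1 / (k : ℝ) ^ 2) ≤ Real.exp (1 / (k:ℝ)^2) := by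
        have := Real.add_one_le_exp (1 / (k:ℝ)^2)
        linarith
      have key : 1 / (k:ℝ)^2 + (2 / (N : ℝ) - 2 / (k : ℝ)) ≤
          2 / (N : ℝ) - 2 / ((k:ℝ) + 1) := by
        have : 1 / (k:ℝ)^2 ≤ 2 / (k:ℝ) - 2 / ((k:ℝ) + 1) := by
          rw [div_sub_div _ _ (ne_of_gt hk0) (ne_of_gt hk10), div_le_div_iff₀ (by positivity) (by positivity)]
          ring_nf
          nlinarith
        linarith
      calc runMax a (k+1) ≤ (1 + 1 / (k : ℝ) ^ 2) * runMax a k := step k hk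
        _ ≤ Real.exp (1 / (k:ℝ)^2) * (runMax a N * Real.exp (2 / (N : ℝ) - 2 / (k : ℝ))) := by
            apply mul_le_mul hexp ih hMk (le_of_lt (Real.exp_pos _))
        _ = runMax a N * Real.exp (1 / (k:ℝ)^2 + (2 / (N : ℝ) - 2 / (k : ℝ))) := by
            rw [Real.exp_add]; ring
        _ ≤ runMax a N * Real.exp (2 / (N : ℝ) - 2 / ((k:ℝ) + 1)) := by
            apply mul_le_mul_of_nonneg_left (Real.exp_le_exp.mpr key) (le_of_lt hMN)
        _ = runMax a N * Real.exp (2 / (N : ℝ) - 2 / ((k+1 : ℕ):ℝ)) := by push_cast; ring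
  -- a is eventually bounded above
  set C : ℝ := runMax a N * Real.exp 2 with hC
  have hev : ∀ᶠ k in atTop, (a k : EReal) ≤ (C : EReal) := by
    filter_upwards [eventually_ge_atTop (N+1)] with k hk
    have hk1 : 1 ≤ k := by omega
    have hNle : N ≤ k := by omega
    have hMN : (0:ℝ) < runMax a N := lt_of_lt_of_le zero_lt_one (one_le_runMax a N)
    have h1 : a k ≤ runMax a k := le_runMax a hk1 le_rfl
    have h2 := bound k hNle
    have hNpos : (0:ℝ) < (N:ℝ) := by exact_mod_cast Nat.pos_of_ne_zero (by omega)
    have hkpos : (0:ℝ) < (k:ℝ) := by exact_mod_cast Nat.pos_of_ne_zero (by omega)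
    have hexp2 : 2 / (N : ℝ) - 2 / (k : ℝ) ≤ 2 := by
      have hA : 2 / (N:ℝ) ≤ 2 := by
        rw [div_le_iff₀ hNpos]
        have : (1:ℝ) ≤ (N:ℝ) := by exact_mod_cast hN1
        nlinarith
      have hB : (0:ℝ) ≤ 2 / (k:ℝ) := by positivity
      linarith
    have h3 : runMax a N * Real.exp (2 / (N : ℝ) - 2 / (k : ℝ)) ≤ C := by
      rw [hC]
      exact mul_le_mul_of_nonneg_left (Real.exp_le_exp.mpr hexp2) (le_of_lt hMN)
    have : a k ≤ C := le_trans h1 (le_trans h2 h3)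
    exact_mod_cast this
  have hle : limsup (fun n => (a n : EReal)) atTop ≤ (C : EReal) :=
    limsup_le_of_le (by isBoundedDefault) hev
  rw [h] at hle
  exact (not_le.mpr (EReal.coe_lt_top C)) hle
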